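/- Let φ : ℝ → ℝ be continuous and 2π-periodic, and set φ̄(x) = φ(x) − (2π)^{-1}∫₀^{2π}φ(y)dy. Then for all σ > 0 and θ ∈ [0,2π), |∫_ℝ φ(θ + σx) e^{−x²/2}/√(2π) dx − (2π)^{-1}∫₀^{2π}φ(x)dx| ≤ (2√(2π)/σ) sup_{x∈[0,2π)} |φ(x)|. -/

import Mathlib

open Real MeasureTheory Set Filter

/-- Gaussian equidistribution modulo 2π: for φ continuous and 2π-periodic, σ > 0 and
θ ∈ [0,2π), |∫ φ(θ+σx) e^{−x²/2}/√(2π) dx − (2π)⁻¹∫₀^{2π}φ| ≤ (2√(2π)/σ) sup_{[0,2π)}|φ|. -/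
theorem stmt17 (φ : ℝ → ℝ) (hφc : Continuous φ) (hφp : Function.Periodic φ (2 * π))
    (σ : ℝ) (hσ : 0 < σ) (θ : ℝ) (hθ : θ ∈ Set.Ico 0 (2 * π)) :
    |(∫ x : ℝ, φ (θ + σ * x) * (Real.exp (-x ^ 2 / 2) / Real.sqrt (2 * π)))
        - (2 * π)⁻¹ * ∫ y in (0 : ℝ)..(2 * π), φ y|
      ≤ (2 * Real.sqrt (2 * π) / σ) * ⨆ x : Set.Ico (0 : ℝ) (2 * π), |φ x| := by
  have hπ : 0 < 2 * π := by positivity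
  have hs : (0:ℝ) < Real.sqrt (2 * π) := Real.sqrt_pos.mpr hπ
  set M := ⨆ x : Set.Ico (0 : ℝ) (2 * π), |φ x| with hMdef
  set m := (2 * π)⁻¹ * ∫ y in (0 : ℝ)..(2 * π), φ y with hmdef
  -- sup bound
  have hle : ∀ t, |φ t| ≤ M := by
    have hbdd : BddAbove (Set.range fun x : Set.Ico (0 : ℝ) (2 * π) => |φ x|) := by
      obtain ⟨C, hC⟩ := (isCompact_Icc (a := (0:ℝ)) (b := 2*π)).bddAbove_image
        (hφc.abs.continuousOn)
      refine ⟨C, ?_⟩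
      rintro y ⟨⟨x, hx⟩, rfl⟩
      exact hC ⟨x, Ico_subset_Icc_self hx, rfl⟩
    intro t
    have hmem := toIcoMod_mem_Ico hπ 0 t
    rw [zero_add] at hmem
    have heq : φ (toIcoMod hπ 0 t) = φ t := by
      rw [toIcoMod]; exact hφp.sub_zsmul_eq _
    calc |φ t| = |φ (toIcoMod hπ 0 t)| := by rw [heq]
      _ ≤ M := le_ciSup hbdd (⟨toIcoMod hπ 0 t, hmem⟩ : Set.Ico (0:ℝ) (2*π))
  have hM0 : 0 ≤ M := le_trans (abs_nonneg _) (hle 0)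
  have hmM : |m| ≤ M := by
    have h1 : ‖∫ y in (0:ℝ)..(2*π), φ y‖ ≤ M * |2*π - 0| :=
      intervalIntegral.norm_integral_le_of_norm_le_const (fun x _ => hle x)
    rw [Real.norm_eq_abs, sub_zero, abs_of_pos hπ] at h1
    rw [hmdef, abs_mul, abs_of_pos (inv_pos.mpr hπ)]
    calc (2*π)⁻¹ * |∫ y in (0:ℝ)..(2*π), φ y| ≤ (2*π)⁻¹ * (M * (2*π)) := by
          exact mul_le_mul_of_nonneg_left h1 (inv_pos.mpr hπ).le
      _ = M := by field_simp
  set ψ := fun t => φ t - m with hψdef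
  have hψc : Continuous ψ := hφc.sub continuous_const
  have hψb : ∀ t, |ψ t| ≤ 2 * M := by
    intro t
    have h := abs_add_le (φ t) (-m)
    rw [abs_neg] at h
    have : |φ t - m| ≤ |φ t| + |m| := by rw [sub_eq_add_neg]; exact h
    have h1 := hle t
    simp only [hψdef]
    linarith
  have hψp : Function.Periodic ψ (2*π) := fun x => by simp [hψdef, hφp x]
  set Φ := fun t => ∫ y in (0:ℝ)..t, ψ y with hΦdef
  have hΦd : ∀ t, HasDerivAt Φ (ψ t) t := fun t =>
    intervalIntegral.integral_hasDerivAt_right (hψc.intervalIntegrable _ _)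
      (hψc.stronglyMeasurableAtFilter _ _) hψc.continuousAt
  have hΦc : Continuous Φ := continuous_iff_continuousAt.2 fun t => (hΦd t).continuousAt
  have hΦ2π : Φ (2*π) = 0 := by
    have h1 : Φ (2*π) = (∫ y in (0:ℝ)..(2*π), φ y) - (2*π) * m := by
      simp only [hΦdef, hψdef]
      rw [intervalIntegral.integral_sub (hφc.intervalIntegrable _ _) intervalIntegrable_const]
      rw [intervalIntegral.integral_const]
      simp [smul_eq_mul]
    rw [h1, hmdef]
    field_simp
    ring
  have hΦper : Function.Periodic Φ (2 * π) := by
    intro t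
    have h1 : (∫ y in (0:ℝ)..(t + 2*π), ψ y)
        = (∫ y in (0:ℝ)..t, ψ y) + ∫ y in t..(t + 2*π), ψ y := by
      rw [intervalIntegral.integral_add_adjacent_intervals (hψc.intervalIntegrable _ _)
        (hψc.intervalIntegrable _ _)]
    have h2 : (∫ y in t..(t + 2*π), ψ y) = ∫ y in (0:ℝ)..(0 + 2*π), ψ y :=
      hψp.intervalIntegral_add_eq t 0
    have h0 : (∫ y in (0:ℝ)..(2*π), ψ y) = 0 := hΦ2π
    simp only [hΦdef]
    rw [h1, h2, zero_add, h0, add_zero]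
  have hΦIcc : ∀ t ∈ Set.Icc (0:ℝ) (2*π), |Φ t| ≤ 2 * π * M := by
    intro t ht
    rcases le_or_gt t π with h | h
    · have h1 : ‖Φ t‖ ≤ (2*M) * |t - 0| :=
        intervalIntegral.norm_integral_le_of_norm_le_const (fun x _ => hψb x)
      rw [Real.norm_eq_abs, sub_zero, abs_of_nonneg ht.1] at h1
      nlinarith [ht.1]
    · have hadd : Φ t + (∫ y in t..(2*π), ψ y) = Φ (2*π) := by
        simp only [hΦdef]
        exact intervalIntegral.integral_add_adjacent_intervals (hψc.intervalIntegrable _ _)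
          (hψc.intervalIntegrable _ _)
      have h2 : ‖∫ y in t..(2*π), ψ y‖ ≤ (2*M) * |2*π - t| :=
        intervalIntegral.norm_integral_le_of_norm_le_const (fun x _ => hψb x)
      rw [Real.norm_eq_abs, abs_of_nonneg (by linarith [ht.2] : (0:ℝ) ≤ 2*π - t)] at h2
      have h3 : Φ t = - ∫ y in t..(2*π), ψ y := by rw [hΦ2π] at hadd; linarith
      rw [h3, abs_neg]
      nlinarith [ht.2]
  have hΦb : ∀ t, |Φ t| ≤ 2 * π * M := by
    intro t
    have hmem := toIcoMod_mem_Ico hπ 0 t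
    rw [zero_add] at hmem
    have heq : Φ (toIcoMod hπ 0 t) = Φ t := by
      rw [toIcoMod]; exact hΦper.sub_zsmul_eq _
    rw [← heq]
    exact hΦIcc _ (Ico_subset_Icc_self hmem)
  -- Gaussian facts
  set E := fun x : ℝ => Real.exp (-x ^ 2 / 2) with hEdef
  have hEc : Continuous E := by fun_prop
  have hEpos : ∀ x, 0 < E x := fun x => exp_pos _
  have hE_int : Integrable E := by
    have h := integrable_exp_neg_mul_sq (show (0:ℝ) < 1/2 by norm_num)
    exact h.congr (Filter.EventuallyEq.of_eq (by funext x; simp only [hEdef]; ring_nf))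
  have hxE_int : Integrable (fun x : ℝ => x * E x) := by
    have h := integrable_mul_exp_neg_mul_sq (show (0:ℝ) < 1/2 by norm_num)
    exact h.congr (Filter.EventuallyEq.of_eq (by funext x; simp only [hEdef]; ring_nf))
  have hEi : (∫ x : ℝ, E x) = Real.sqrt (2 * π) := by
    have h := integral_gaussian (1/2 : ℝ)
    rw [show π / (1/2 : ℝ) = 2 * π by ring] at h
    rw [← h]
    congr 1; funext x; simp only [hEdef]; ring_nf
  have hEd : ∀ x : ℝ, HasDerivAt E (-x * E x) x := by
    intro x
    have h1 : HasDerivAt (fun x : ℝ => -x ^ 2 / 2) (-x) x := by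
      have := ((hasDerivAt_pow 2 x).neg.div_const 2)
      exact this.congr_deriv (by norm_num; ring)
    simpa [hEdef, mul_comm] using h1.exp
  have hIoi : (∫ x in Ioi (0:ℝ), x * E x) = 1 := by
    have hEd' : ∀ x : ℝ, HasDerivAt (fun x : ℝ => -E x) (x * E x) x := by
      intro x
      have := (hEd x).neg
      exact this.congr_deriv (by ring)
    have htends : Tendsto (fun x : ℝ => -E x) atTop (nhds 0) := by
      rw [show (0:ℝ) = -0 by ring]
      apply Tendsto.neg
      apply Real.tendsto_exp_atBot.comp
      apply Filter.Tendsto.atBot_div_const (by norm_num : (0:ℝ) < 2)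
      exact tendsto_neg_atBot_iff.mpr (tendsto_pow_atTop (by norm_num))
    have h := MeasureTheory.integral_Ioi_of_hasDerivAt_of_tendsto
      (f := fun x : ℝ => -E x) (f' := fun x : ℝ => x * E x) (a := 0)
      (hEc.neg.continuousWithinAt) (fun x _ => hEd' x) hxE_int.integrableOn htends
    rw [h]
    simp [hEdef]
  have habsE_int : Integrable (fun x : ℝ => |x| * E x) :=
    hxE_int.abs.congr (ae_of_all _ fun x => by
      simp [abs_mul, abs_of_pos (hEpos x)])
  have habsE : (∫ x : ℝ, |x| * E x) = 2 := by
    have h := integral_comp_abs (f := fun x : ℝ => x * E x)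
    have h2 : (fun x : ℝ => |x| * E |x|) = fun x : ℝ => |x| * E x := by
      funext x; simp only [hEdef, sq_abs]
    rw [show (∫ x : ℝ, |x| * E x) = ∫ x : ℝ, |x| * E |x| by rw [h2]]
    rw [h, hIoi]; norm_num
  -- the composed functions
  set v := fun x : ℝ => Φ (θ + σ * x) with hvdef
  set w := fun x : ℝ => σ * ψ (θ + σ * x) with hwdef
  have hvd : ∀ x, HasDerivAt v (w x) x := by
    intro x
    have haff : HasDerivAt (fun x : ℝ => θ + σ * x) σ x := by
      simpa using ((hasDerivAt_id x).const_mul σ).const_add θ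
    have := (hΦd (θ + σ * x)).comp x haff
    exact this.congr_deriv (mul_comm _ _)
  have hvc : Continuous v := hΦc.comp (by fun_prop)
  have hwc : Continuous w := continuous_const.mul (hψc.comp (by fun_prop))
  have hvb : ∀ x, ‖v x‖ ≤ 2 * π * M := fun x => hΦb _
  have hwb : ∀ x, ‖w x‖ ≤ σ * (2 * M) := by
    intro x
    rw [Real.norm_eq_abs, hwdef, abs_mul, abs_of_pos hσ]
    exact mul_le_mul_of_nonneg_left (hψb _) hσ.le
  -- integrabilities
  have huv' : Integrable (E * w) :=
    (hE_int.bdd_mul hwc.aestronglyMeasurable (c := σ * (2*M)) (ae_of_all _ hwb)).congr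
      (ae_of_all _ fun x => mul_comm _ _)
  have hu'v : Integrable ((fun x : ℝ => -x * E x) * v) :=
    (hxE_int.neg.bdd_mul hvc.aestronglyMeasurable (c := 2*π*M) (ae_of_all _ hvb)).congr
      (ae_of_all _ fun x => by simp [mul_comm, neg_mul, mul_neg])
  have huv : Integrable (E * v) :=
    (hE_int.bdd_mul hvc.aestronglyMeasurable (c := 2*π*M) (ae_of_all _ hvb)).congr
      (ae_of_all _ fun x => mul_comm _ _)
  -- integration by parts
  have hparts : (∫ x : ℝ, E x * w x) = - ∫ x : ℝ, (-x * E x) * v x :=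
    MeasureTheory.integral_mul_deriv_eq_deriv_mul_of_integrable (fun x _ => hEd x) (fun x _ => hvd x) huv' hu'v huv
  -- rewrite both sides
  have hL : (∫ x : ℝ, E x * w x) = σ * ∫ x : ℝ, ψ (θ + σ * x) * E x := by
    rw [← MeasureTheory.integral_const_mul]
    congr 1; funext x; simp only [hwdef]; ring
  have hR : (- ∫ x : ℝ, (-x * E x) * v x) = ∫ x : ℝ, (x * E x) * v x := by
    rw [← MeasureTheory.integral_neg]
    congr 1; funext x; ring
  have key : (∫ x : ℝ, ψ (θ + σ * x) * E x) = σ⁻¹ * ∫ x : ℝ, (x * E x) * v x := by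
    rw [← hR, ← hparts, hL]
    field_simp
  -- bound the right side
  have hxEv_int : Integrable (fun x : ℝ => (x * E x) * v x) :=
    (hxE_int.bdd_mul hvc.aestronglyMeasurable (c := 2*π*M) (ae_of_all _ hvb)).congr
      (ae_of_all _ fun x => mul_comm _ _)
  have hbd : |∫ x : ℝ, (x * E x) * v x| ≤ 2 * (2 * π * M) := by
    calc |∫ x : ℝ, (x * E x) * v x| ≤ ∫ x : ℝ, |(x * E x) * v x| :=
          by simpa only [Real.norm_eq_abs] using
            MeasureTheory.norm_integral_le_integral_norm (μ := volume)
              (f := fun x : ℝ => (x * E x) * v x)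
      _ ≤ ∫ x : ℝ, |x| * E x * (2 * π * M) := by
          apply MeasureTheory.integral_mono hxEv_int.abs (habsE_int.mul_const _)
          intro x
          show |x * E x * v x| ≤ |x| * E x * (2 * π * M)
          rw [abs_mul, abs_mul, abs_of_pos (hEpos x)]
          exact mul_le_mul_of_nonneg_left (hvb x) (by positivity)
      _ = (∫ x : ℝ, |x| * E x) * (2 * π * M) := MeasureTheory.integral_mul_const _ _
      _ = 2 * (2 * π * M) := by rw [habsE]
  -- assemble
  have hφσc : Continuous (fun x : ℝ => φ (θ + σ * x)) := by fun_prop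
  have hφE_int : Integrable (fun x : ℝ => φ (θ + σ * x) * E x) :=
    hE_int.bdd_mul hφσc.aestronglyMeasurable (c := M) (ae_of_all _ fun x => hle _)
  have hA : (∫ x : ℝ, φ (θ + σ * x) * (E x / Real.sqrt (2*π)))
      = (Real.sqrt (2*π))⁻¹ * ∫ x : ℝ, φ (θ + σ * x) * E x := by
    rw [← MeasureTheory.integral_const_mul]
    congr 1; funext x; ring
  have hsub : (∫ x : ℝ, φ (θ + σ * x) * E x) - m * Real.sqrt (2*π)
      = ∫ x : ℝ, ψ (θ + σ * x) * E x := by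
    rw [show m * Real.sqrt (2*π) = ∫ x : ℝ, m * E x by
        rw [MeasureTheory.integral_const_mul, hEi]]
    rw [← MeasureTheory.integral_sub hφE_int (hE_int.const_mul m)]
    congr 1; funext x; simp only [hψdef]; ring
  have hAm : (∫ x : ℝ, φ (θ + σ * x) * (E x / Real.sqrt (2*π))) - m
      = (Real.sqrt (2*π))⁻¹ * (σ⁻¹ * ∫ x : ℝ, (x * E x) * v x) := by
    rw [hA, ← key, ← hsub]
    field_simp
  calc |(∫ x : ℝ, φ (θ + σ * x) * (E x / Real.sqrt (2*π))) - m|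
      = (Real.sqrt (2*π))⁻¹ * (σ⁻¹ * |∫ x : ℝ, (x * E x) * v x|) := by
        rw [hAm, abs_mul, abs_mul, abs_of_pos (inv_pos.mpr hs), abs_of_pos (inv_pos.mpr hσ)]
    _ ≤ (Real.sqrt (2*π))⁻¹ * (σ⁻¹ * (2 * (2 * π * M))) := by
        apply mul_le_mul_of_nonneg_left _ (inv_pos.mpr hs).le
        exact mul_le_mul_of_nonneg_left hbd (inv_pos.mpr hσ).le
    _ = (2 * Real.sqrt (2 * π) / σ) * M := by
        have h2π : Real.sqrt (2*π) * Real.sqrt (2*π) = 2*π := Real.mul_self_sqrt hπ.le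
        rw [show 2 * (2 * π * M) = 2 * (Real.sqrt (2*π) * Real.sqrt (2*π) * M) by rw [h2π]]
        field_simp
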